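/- Let p be a prime, d an even positive integer, and let M be a d×d matrix over the ring ℤ_p of p-adic integers which is alternating (Mᵀ = −M and all diagonal entries are 0), satisfies det M ≠ 0, and whose reduction modulo p has rank d−2 as a matrix over F_p. Then for every natural number r, the number of row vectors x ∈ (ℤ/p^rℤ)^d satisfying x·M̄ = 0, where M̄ is the entrywise reduction of M modulo p^r, equals p^{min(2r, v)}, where v is the p-adic valuation of det M. -/

import Mathlib

open Matrix



lemma card_ann (p : ℕ) [hp : Fact p.Prime] (r k : ℕ) :
    Nat.card {t : ZMod (p^r) // t * (p:ZMod (p^r))^k = 0} = p ^ min r k := by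
  haveI : NeZero (p^r) := ⟨pow_ne_zero r hp.1.ne_zero⟩
  set s := min r k with hs
  have hsr : s ≤ r := min_le_left _ _
  have hm : 0 < p ^ (r - s) := pow_pos hp.1.pos _
  have hsplit : p ^ (r - s) * p ^ s = p ^ r := by
    rw [← pow_add]; congr 1; omega
  have key : ∀ t : ZMod (p^r), t * (p:ZMod (p^r))^k = 0 ↔ p ^ (r - s) ∣ t.val := by
    intro t
    have h1 : ((t.val * p ^ k : ℕ) : ZMod (p^r)) = t * (p:ZMod (p^r))^k := by
      push_cast [ZMod.natCast_val, ZMod.cast_id]; rfl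
    rw [← h1, ZMod.natCast_eq_zero_iff]
    constructor
    · intro h
      rcases le_or_gt r k with hrk | hkr
      · have : s = r := by omega
        simp [this]
      · have hsk : s = k := by omega
        have h2 : p ^ (r - k) * p ^ k ∣ t.val * p ^ k := by
          rw [← pow_add]
          have e : r - k + k = r := by omega
          rw [e]; exact h
        rw [hsk]
        exact (Nat.mul_dvd_mul_iff_right (pow_pos hp.1.pos k)).mp h2
    · rintro ⟨c, hc⟩
      have hdvd : p ^ r ∣ p ^ (r-s) * p ^ k := by
        rw [← pow_add]; exact pow_dvd_pow p (by omega)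
      have : t.val * p ^ k = (p ^ (r-s) * p ^ k) * c := by rw [hc]; ring
      rw [this]
      exact Dvd.dvd.mul_right hdvd c
  have e : {t : ZMod (p^r) // t * (p:ZMod (p^r))^k = 0} ≃ Fin (p ^ s) := by
    refine ⟨fun t => ⟨t.1.val / p ^ (r-s), ?_⟩,
            fun a => ⟨((a.val * p ^ (r-s) : ℕ) : ZMod (p^r)), ?_⟩, ?_, ?_⟩
    · have hd := (key t.1).mp t.2
      have hlt : t.1.val < p ^ r := ZMod.val_lt t.1
      rcases hd with ⟨c, hc⟩
      rw [hc, Nat.mul_div_cancel_left _ hm]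
      by_contra hcon
      push_neg at hcon
      have : p ^ (r-s) * p ^ s ≤ p ^ (r-s) * c := Nat.mul_le_mul_left _ hcon
      rw [hsplit] at this; omega
    · rw [key, ZMod.val_natCast]
      rw [Nat.dvd_mod_iff]
      · exact dvd_mul_left _ _
      · exact pow_dvd_pow p (by omega)
    · intro t
      have hd := (key t.1).mp t.2
      apply Subtype.ext
      simp only []
      rw [Nat.div_mul_cancel hd]
      simp [ZMod.natCast_val, ZMod.cast_id]
    · intro a
      have hlt : a.val * p ^ (r-s) < p ^ r := by
        have h1 : a.val < p ^ s := a.2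
        calc a.val * p ^ (r-s) < p ^ s * p ^ (r-s) := by
              exact (Nat.mul_lt_mul_right hm).mpr h1
          _ = p ^ r := by rw [mul_comm]; exact hsplit
      apply Fin.ext
      simp only []
      rw [ZMod.val_natCast, Nat.mod_eq_of_lt hlt, Nat.mul_div_cancel _ hm]
  rw [Nat.card_congr e]
  simp

lemma isUnit_of_toZMod_ne_zero {p : ℕ} [hp : Fact p.Prime] {x : ℤ_[p]}
    (h : PadicInt.toZMod x ≠ 0) : IsUnit x := by
  rw [← IsLocalRing.notMem_maximalIdeal, ← PadicInt.ker_toZMod, RingHom.mem_ker]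
  exact h

lemma alt_self_zero {R : Type*} [CommRing R] {n : Type*} [Fintype n]
    (M : Matrix n n R) (hskew : Mᵀ = -M) (hdiag : ∀ i, M i i = 0) (v : n → R) :
    ∑ i, ∑ j, v i * (M i j * v j) = 0 := by
  rw [← Finset.sum_product']
  refine Finset.sum_involution (fun a _ => (a.2, a.1)) ?_ ?_ ?_ ?_
  · rintro ⟨i, j⟩ _
    have : M j i = - M i j := by
      have h2 := congrFun (congrFun hskew i) j
      simpa [Matrix.transpose_apply] using h2
    simp only [this]; ring
  · rintro ⟨i, j⟩ _ hf
    intro hcon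
    have hij : j = i := (Prod.mk.injEq _ _ _ _).mp hcon |>.1
    apply hf
    subst hij
    simp [hdiag]
  · rintro ⟨i, j⟩ _; simp
  · rintro ⟨i, j⟩ _; rfl

lemma congr_diag_zero {R : Type*} [CommRing R] {n : Type*} [Fintype n]
    (M P : Matrix n n R) (hskew : Mᵀ = -M) (hdiag : ∀ i, M i i = 0) (k : n) :
    (Pᵀ * M * P) k k = 0 := by
  have h : (Pᵀ * M * P) k k = ∑ i, ∑ j, P i k * (M i j * P j k) := by
    simp only [Matrix.mul_apply, Matrix.transpose_apply, Finset.sum_mul]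
    rw [Finset.sum_comm]
    apply Finset.sum_congr rfl; intro i _
    apply Finset.sum_congr rfl; intro j _
    ring
  rw [h]
  exact alt_self_zero M hskew hdiag _

lemma congr_skew {R : Type*} [CommRing R] {n : Type*} [Fintype n]
    (M P : Matrix n n R) (hskew : Mᵀ = -M) : (Pᵀ * M * P)ᵀ = -(Pᵀ * M * P) := by
  rw [Matrix.transpose_mul, Matrix.transpose_mul, Matrix.transpose_transpose, hskew]
  simp [Matrix.mul_assoc]

lemma vecMul_cancel {R : Type*} [CommRing R] {n : Type*} [Fintype n] [DecidableEq n]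
    {P : Matrix n n R} (h : IsUnit P.det) {w : n → R} (hw : w ᵥ* P = 0) : w = 0 := by
  have h2 := congrArg (fun u => u ᵥ* P⁻¹) hw
  simpa [Matrix.vecMul_vecMul, Matrix.mul_nonsing_inv _ h] using h2

set_option maxHeartbeats 1000000

/-- For an alternating `d × d` matrix `M` over `ℤ_p` (with `d` even) of nonzero
determinant whose reduction mod `p` has rank `d - 2`, the number of solutions of
`x · M ≡ 0 mod p^r` is `p ^ min (2r, v_p(det M))`. -/
theorem stmt3 (p : ℕ) [Fact p.Prime] (d : ℕ) (hd : 0 < d) (hdeven : Even d)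
    (M : Matrix (Fin d) (Fin d) ℤ_[p])
    (halt : Mᵀ = -M) (hdiag : ∀ i, M i i = 0)
    (hdet : M.det ≠ 0)
    (hrank : (M.map (fun a => PadicInt.toZMod a)).rank = d - 2)
    (r : ℕ) :
    Nat.card {x : Fin d → ZMod (p ^ r) //
        Matrix.vecMul x (M.map (fun a => PadicInt.toZModPow r a)) = 0}
      = p ^ min (2 * r) (M.det.valuation) := by
  classical
  have hp : p.Prime := Fact.out
  set m := d - 2 with hm
  have hd2 : 2 ≤ d := by
    rcases hdeven with ⟨t, ht⟩; omega
  have hmd : m + 2 = d := by omega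
  set ι := (Fin m ⊕ Fin 2) with hι
  let e : ι ≃ Fin d := finSumFinEquiv.trans (finCongr hmd)
  set M' : Matrix ι ι ℤ_[p] := M.submatrix e e with hM'
  have hM'skew : M'ᵀ = -M' := by
    ext a b
    simp only [hM', Matrix.transpose_apply, Matrix.submatrix_apply, Matrix.neg_apply]
    have := congrFun (congrFun halt (e a)) (e b)
    simpa using this
  have hM'diag : ∀ a, M' a a = 0 := fun a => hdiag (e a)
  have hdet' : M'.det = M.det := Matrix.det_submatrix_equiv_self e M
  set N' : Matrix ι ι (ZMod p) := M'.map (fun a => PadicInt.toZMod a) with hN'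
  have hrankN' : N'.rank = m := by
    have : N' = (M.map (fun a => PadicInt.toZMod a)).submatrix e e := rfl
    rw [this, Matrix.rank_submatrix, hrank]
  have hN'skew : N'ᵀ = -N' := by
    ext a b
    simp only [hN', Matrix.transpose_apply, Matrix.map_apply, Matrix.neg_apply]
    rw [show M' b a = -M' a b by rw [← Matrix.transpose_apply M' a b, hM'skew]; rfl]
    simp
  -- kernel
  have hfinK : Module.finrank (ZMod p) (LinearMap.ker (Matrix.mulVecLin N')) = 2 := by
    have h1 := LinearMap.finrank_range_add_finrank_ker (Matrix.mulVecLin N')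
    have h2 : Module.finrank (ZMod p) (ι → ZMod p) = m + 2 := by
      simp [hι]
    rw [h2] at h1
    have h3 : Module.finrank (ZMod p) (LinearMap.range (Matrix.mulVecLin N')) = m := hrankN'
    omega
  obtain ⟨W, hcompl⟩ := Submodule.exists_isCompl (LinearMap.ker (Matrix.mulVecLin N'))
  have hfinW : Module.finrank (ZMod p) W = m := by
    have h1 := Submodule.finrank_add_eq_of_isCompl hcompl
    have h2 : Module.finrank (ZMod p) (ι → ZMod p) = m + 2 := by simp [hι]
    omega
  let bW : Module.Basis (Fin m) (ZMod p) W := Module.finBasisOfFinrankEq _ _ hfinW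
  let bK : Module.Basis (Fin 2) (ZMod p) (LinearMap.ker (Matrix.mulVecLin N')) :=
    Module.finBasisOfFinrankEq _ _ hfinK
  let Bfull : Module.Basis ι (ZMod p) (ι → ZMod p) :=
    (bW.prod bK).map (Submodule.prodEquivOfIsCompl W (LinearMap.ker (Matrix.mulVecLin N')) hcompl.symm)
  have hBinl : ∀ i, Bfull (Sum.inl i) = (bW i : ι → ZMod p) := by
    intro i
    simp only [Bfull, Module.Basis.map_apply]
    rw [Submodule.coe_prodEquivOfIsCompl']
    have h1 : (bW.prod bK (Sum.inl i)).1 = bW i := Module.Basis.prod_apply_inl_fst _ _ _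
    have h2 : (bW.prod bK (Sum.inl i)).2 = 0 := Module.Basis.prod_apply_inl_snd _ _ _
    rw [h1, h2]
    simp
  have hBinr : ∀ j, Bfull (Sum.inr j) = (bK j : ι → ZMod p) := by
    intro j
    simp only [Bfull, Module.Basis.map_apply]
    rw [Submodule.coe_prodEquivOfIsCompl']
    have h1 : (bW.prod bK (Sum.inr j)).1 = 0 := Module.Basis.prod_apply_inr_fst _ _ _
    have h2 : (bW.prod bK (Sum.inr j)).2 = bK j := Module.Basis.prod_apply_inr_snd _ _ _
    rw [h1, h2]
    simp
  have hBinrK : ∀ j, N'.mulVec (Bfull (Sum.inr j)) = 0 := by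
    intro j
    rw [hBinr]
    have h2 : N'.mulVecLin (bK j : ι → ZMod p) = 0 := LinearMap.map_coe_ker _ _
    rw [← Matrix.mulVecLin_apply]
    exact h2
  -- transition matrix mod p
  set Pb : Matrix ι ι (ZMod p) := (Pi.basisFun (ZMod p) ι).toMatrix Bfull with hPb
  have hPbapp : ∀ a b, Pb a b = Bfull b a := by
    intro a b
    rw [hPb, Module.Basis.toMatrix_apply]
    simp
  haveI : Invertible Pb := (Pi.basisFun (ZMod p) ι).invertibleToMatrix Bfull
  have hPbdet : IsUnit Pb.det := Matrix.isUnit_det_of_invertible Pb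
  -- lift to ZZ_p
  set P0 : Matrix ι ι ℤ_[p] := Matrix.of (fun a b => ((Pb a b).val : ℤ_[p])) with hP0
  have hP0red : P0.map (fun a => PadicInt.toZMod a) = Pb := by
    ext a b
    simp only [Matrix.map_apply, hP0, Matrix.of_apply]
    rw [map_natCast]
    simp [ZMod.natCast_val, ZMod.cast_id]
  have hP0det : IsUnit P0.det := by
    apply isUnit_of_toZMod_ne_zero
    have : PadicInt.toZMod P0.det = Pb.det := by
      rw [← hP0red]
      exact RingHom.map_det PadicInt.toZMod P0
    rw [this]
    exact hPbdet.ne_zero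
  -- S and its reduction
  set S : Matrix ι ι ℤ_[p] := P0ᵀ * M' * P0 with hSdef
  have hSskew : Sᵀ = -S := by
    rw [hSdef, Matrix.transpose_mul, Matrix.transpose_mul, Matrix.transpose_transpose,
      hM'skew]
    simp [Matrix.mul_assoc]
  have hSdiag : ∀ a, S a a = 0 := fun a => congr_diag_zero M' P0 hM'skew hM'diag a
  have hSred : S.map (fun a => PadicInt.toZMod a) = Pbᵀ * N' * Pb := by
    rw [hSdef]
    rw [show ((P0ᵀ * M' * P0).map (fun a => PadicInt.toZMod a)) =
      (P0ᵀ).map (fun a => PadicInt.toZMod a) * M'.map (fun a => PadicInt.toZMod a)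
        * P0.map (fun a => PadicInt.toZMod a) from by
        rw [← Matrix.map_mul, ← Matrix.map_mul]]
    rw [show (P0ᵀ).map (fun a => PadicInt.toZMod a) = (P0.map (fun a => PadicInt.toZMod a))ᵀ
      from rfl]
    rw [hP0red, hN']
  have hGram : ∀ a b, (S.map (fun x => PadicInt.toZMod x)) a b
      = Bfull a ⬝ᵥ (N'.mulVec (Bfull b)) := by
    intro a b
    rw [hSred]
    rw [Matrix.mul_apply]
    simp only [Matrix.mul_apply, Matrix.transpose_apply, Matrix.mulVec, dotProduct,
      Finset.sum_mul, Finset.mul_sum, hPbapp]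
    rw [Finset.sum_comm]
    apply Finset.sum_congr rfl
    intro x _
    apply Finset.sum_congr rfl
    intro y _
    ring
  have hSbar12 : ∀ (a : ι) (j : Fin 2),
      (S.map (fun x => PadicInt.toZMod x)) a (Sum.inr j) = 0 := by
    intro a j
    rw [hGram, hBinrK]
    simp
  have hSbar21 : ∀ (i : Fin 2) (b : ι),
      (S.map (fun x => PadicInt.toZMod x)) (Sum.inr i) b = 0 := by
    intro i b
    rw [hGram]
    rw [Matrix.dotProduct_mulVec]
    have hvm : Bfull (Sum.inr i) ᵥ* N' = 0 := by
      rw [← Matrix.mulVec_transpose, hN'skew]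
      rw [Matrix.neg_mulVec, hBinrK]
      simp
    rw [hvm]
    simp [dotProduct]
  -- the top-left block mod p is invertible
  set Ab : Matrix (Fin m) (Fin m) (ZMod p) :=
    (S.map (fun x => PadicInt.toZMod x)).toBlocks₁₁ with hAb
  have hAbapp : ∀ i j, Ab i j = (S.map (fun x => PadicInt.toZMod x)) (Sum.inl i) (Sum.inl j) :=
    fun i j => rfl
  have hAbdet : Ab.det ≠ 0 := by
    intro hdet0
    obtain ⟨x, hx0, hxA⟩ := Matrix.exists_mulVec_eq_zero_iff.mpr hdet0
    set y : ι → ZMod p := Sum.elim x 0 with hy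
    set w : ι → ZMod p := Pb.mulVec y with hw
    have hSy : (S.map (fun x => PadicInt.toZMod x)).mulVec y = 0 := by
      funext a
      rw [Matrix.mulVec, dotProduct]
      cases a with
      | inl i =>
        have : ∀ b : ι, (S.map (fun x => PadicInt.toZMod x)) (Sum.inl i) b * y b
            = Sum.elim (fun j => Ab i j * x j) (fun _ => 0) b := by
          rintro (j | j)
          · simp [hy, hAbapp]
          · simp [hy]
        rw [Finset.sum_congr rfl (fun b _ => this b)]
        rw [Fintype.sum_sum_type]
        simp only [Sum.elim_inl, Sum.elim_inr, Finset.sum_const_zero, add_zero]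
        have := congrFun hxA i
        simpa [Matrix.mulVec, dotProduct] using this
      | inr i =>
        apply Finset.sum_eq_zero
        intro b _
        rw [hSbar21]
        simp
    have hNw : N'.mulVec w = 0 := by
      haveI : Invertible Pbᵀ := Matrix.invertibleTranspose Pb
      apply Matrix.mulVec_injective_of_invertible Pbᵀ
      show Pbᵀ *ᵥ (N' *ᵥ w) = Pbᵀ *ᵥ 0
      rw [hw, Matrix.mulVec_mulVec, Matrix.mulVec_mulVec, ← hSred, hSy,
        Matrix.mulVec_zero]
    have hwW : w ∈ W := by
      have hwsum : w = ∑ j : Fin m, x j • (bW j : ι → ZMod p) := by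
        funext a
        rw [hw, Matrix.mulVec, dotProduct, Fintype.sum_sum_type]
        simp only [hy, Sum.elim_inl, Sum.elim_inr, Pi.zero_apply, mul_zero, Finset.sum_const_zero, add_zero]
        rw [Finset.sum_apply]
        apply Finset.sum_congr rfl
        intro j _
        rw [hPbapp, hBinl]
        simp [mul_comm]
      rw [hwsum]
      exact Submodule.sum_mem _ (fun j _ => Submodule.smul_mem _ _ (bW j).2)
    have hwK : w ∈ LinearMap.ker (Matrix.mulVecLin N') := by
      rw [LinearMap.mem_ker]
      rw [Matrix.mulVecLin_apply]
      exact hNw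
    have hw0 : w = 0 := Submodule.disjoint_def.mp hcompl.disjoint w hwK hwW
    have hwsum : w = ∑ j : Fin m, x j • (bW j : ι → ZMod p) := by
      funext a
      rw [hw, Matrix.mulVec, dotProduct, Fintype.sum_sum_type]
      simp only [hy, Sum.elim_inl, Sum.elim_inr, Pi.zero_apply, mul_zero, Finset.sum_const_zero, add_zero]
      rw [Finset.sum_apply]
      apply Finset.sum_congr rfl
      intro j _
      rw [hPbapp, hBinl]
      simp [mul_comm]
    have hsubsum : ((∑ j : Fin m, x j • bW j : W) : ι → ZMod p)
        = ∑ j : Fin m, x j • (bW j : ι → ZMod p) := by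
      push_cast
      rfl
    have hsub0 : (∑ j : Fin m, x j • bW j : W) = 0 := by
      apply Subtype.ext
      rw [hsubsum, ← hwsum, hw0]
      rfl
    have hxz := Fintype.linearIndependent_iff.mp bW.linearIndependent x hsub0
    exact hx0 (funext hxz)
  -- lift top-left block: it is invertible over Z_p
  set A : Matrix (Fin m) (Fin m) ℤ_[p] := S.toBlocks₁₁ with hA
  have hAred : A.map (fun x => PadicInt.toZMod x) = Ab := rfl
  have hAdet : IsUnit A.det := by
    apply isUnit_of_toZMod_ne_zero
    have : PadicInt.toZMod A.det = Ab.det := by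
      rw [← hAred]
      exact RingHom.map_det PadicInt.toZMod A
    rw [this]
    exact hAbdet
  set Bb : Matrix (Fin m) (Fin 2) ℤ_[p] := S.toBlocks₁₂ with hBb
  set Cb : Matrix (Fin 2) (Fin m) ℤ_[p] := S.toBlocks₂₁ with hCb
  set Db : Matrix (Fin 2) (Fin 2) ℤ_[p] := S.toBlocks₂₂ with hDb
  have hSblocks : S = Matrix.fromBlocks A Bb Cb Db := (Matrix.fromBlocks_toBlocks S).symm
  have hAskew : Aᵀ = -A := by
    ext i j
    have := congrFun (congrFun hSskew (Sum.inl i)) (Sum.inl j)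
    exact this
  have hCBb : Cb = -(Bbᵀ) := by
    ext i j
    have := congrFun (congrFun hSskew (Sum.inl j)) (Sum.inr i)
    simp only [Matrix.transpose_apply, Matrix.neg_apply] at this ⊢
    -- this : S (Sum.inr i) (Sum.inl j) = -S (Sum.inl j) (Sum.inr i)
    exact this
  set X : Matrix (Fin m) (Fin 2) ℤ_[p] := -(A⁻¹ * Bb) with hX
  set Q : Matrix ι ι ℤ_[p] := Matrix.fromBlocks 1 X 0 1 with hQ
  have hQdet : IsUnit Q.det := by
    rw [hQ, Matrix.det_fromBlocks_zero₂₁]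
    simp
  have hAX : A * X + Bb = 0 := by
    rw [hX, Matrix.mul_neg, ← Matrix.mul_assoc, Matrix.mul_nonsing_inv A hAdet,
      Matrix.one_mul]
    simp
  have hXA : Xᵀ * A + Cb = 0 := by
    have hXT : Xᵀ = Bbᵀ * A⁻¹ := by
      rw [hX, Matrix.transpose_neg, Matrix.transpose_mul, Matrix.transpose_nonsing_inv,
        hAskew]
      have hneginv : (-A)⁻¹ = -(A⁻¹) := by
        apply Matrix.inv_eq_right_inv
        rw [Matrix.neg_mul, Matrix.mul_neg, neg_neg, Matrix.mul_nonsing_inv A hAdet]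
      rw [hneginv, Matrix.mul_neg, neg_neg]
    rw [hXT, Matrix.mul_assoc, Matrix.nonsing_inv_mul A hAdet, Matrix.mul_one, hCBb]
    simp
  set G : Matrix (Fin 2) (Fin 2) ℤ_[p] := Xᵀ * Bb + Db with hG
  set PQ : Matrix ι ι ℤ_[p] := P0 * Q with hPQ
  set W2 : Matrix ι ι ℤ_[p] := PQᵀ * M' * PQ with hW2
  have hW2S : W2 = Qᵀ * S * Q := by
    rw [hW2, hPQ, hSdef, Matrix.transpose_mul]
    noncomm_ring
  have hW2blocks : W2 = Matrix.fromBlocks A 0 0 G := by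
    rw [hW2S, hSblocks, hQ, Matrix.fromBlocks_transpose, Matrix.transpose_one,
      Matrix.transpose_one, Matrix.transpose_zero, Matrix.fromBlocks_multiply,
      Matrix.fromBlocks_multiply]
    rw [Matrix.fromBlocks_inj]
    refine ⟨by simp, ?_, ?_, ?_⟩
    · simp only [Matrix.one_mul, Matrix.zero_mul, Matrix.mul_one, Matrix.mul_zero,
        add_zero, zero_add]
      exact hAX
    · simp only [Matrix.one_mul, Matrix.zero_mul, Matrix.mul_one, Matrix.mul_zero,
        add_zero, zero_add]
      exact hXA
    · simp only [Matrix.one_mul, Matrix.zero_mul, Matrix.mul_one, Matrix.mul_zero,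
        add_zero, zero_add]
      rw [hXA, Matrix.zero_mul, zero_add]
  have hW2skew : W2ᵀ = -W2 := by
    rw [hW2]
    exact congr_skew M' PQ hM'skew
  have hW2diag : ∀ a, W2 a a = 0 := fun a => congr_diag_zero M' PQ hM'skew hM'diag a
  set g : ℤ_[p] := G 0 1 with hg
  have hGapp : ∀ i j, G i j = W2 (Sum.inr i) (Sum.inr j) := by
    intro i j
    rw [hW2blocks]
    rfl
  have hG00 : G 0 0 = 0 := by rw [hGapp]; exact hW2diag _
  have hG11 : G 1 1 = 0 := by rw [hGapp]; exact hW2diag _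
  have hG10 : G 1 0 = -g := by
    rw [hGapp]
    have hskew2 := congrFun (congrFun hW2skew (Sum.inr 0)) (Sum.inr 1)
    simp only [Matrix.transpose_apply, Matrix.neg_apply] at hskew2
    rw [hskew2, ← hGapp 0 1]
  have hdetG : G.det = g * g := by
    rw [Matrix.det_fin_two, hG00, hG11, hG10]
    ring
  have hdetW2 : W2.det = A.det * (g * g) := by
    rw [hW2blocks, Matrix.det_fromBlocks_zero₂₁, hdetG]
  have hdetW2' : W2.det = PQ.det * PQ.det * M.det := by
    rw [hW2, Matrix.det_mul, Matrix.det_mul, Matrix.det_transpose, hdet']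
    ring
  have hPQdet : IsUnit PQ.det := by
    rw [hPQ, Matrix.det_mul]
    exact hP0det.mul hQdet
  have hdetrel : PQ.det * PQ.det * M.det = A.det * (g * g) := by
    rw [← hdetW2', hdetW2]
  have hgne : g ≠ 0 := by
    intro h0
    rw [h0, mul_zero, mul_zero] at hdetrel
    exact (mul_ne_zero (mul_ne_zero hPQdet.ne_zero hPQdet.ne_zero) hdet) hdetrel
  -- valuation relation
  have hnormrel : ‖M.det‖ = ‖g‖ * ‖g‖ := by
    have h1 : ‖PQ.det * PQ.det * M.det‖ = ‖A.det * (g * g)‖ := by rw [hdetrel]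
    rw [norm_mul, norm_mul, norm_mul, norm_mul] at h1
    rw [PadicInt.isUnit_iff.mp hPQdet, PadicInt.isUnit_iff.mp hAdet, one_mul, one_mul,
      one_mul] at h1
    exact h1
  have hvalrel : M.det.valuation = 2 * g.valuation := by
    have h1p : (1:ℝ) < p := by exact_mod_cast hp.one_lt
    have h0p : (p:ℝ) ≠ 0 := by positivity
    have h2 := hnormrel
    rw [PadicInt.norm_eq_zpow_neg_valuation hdet, PadicInt.norm_eq_zpow_neg_valuation hgne,
      ← zpow_add₀ h0p] at h2
    have h3 := (zpow_right_strictMono₀ h1p).injective h2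
    omega
  -- counting
  set φ : ℤ_[p] →+* ZMod (p ^ r) := PadicInt.toZModPow r with hφ
  set k : ℕ := g.valuation with hk
  have hM'map : M'.map ⇑φ = (M.map fun a => PadicInt.toZModPow r a).submatrix e e := rfl
  have hcond1 : ∀ x : Fin d → ZMod (p^r),
      Matrix.vecMul x (M.map fun a => PadicInt.toZModPow r a) = 0 ↔
        (fun a => x (e a)) ᵥ* (M'.map ⇑φ) = 0 := by
    intro x
    rw [hM'map, Matrix.submatrix_vecMul_equiv]
    have hc : (fun a => x (e a)) ∘ ⇑e.symm = x := by funext i; simp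
    rw [hc]
    constructor
    · intro h; rw [h]; funext a; rfl
    · intro h; funext i
      have h2 := congrFun h (e.symm i)
      simpa using h2
  let E1 : {x : Fin d → ZMod (p^r) //
        Matrix.vecMul x (M.map fun a => PadicInt.toZModPow r a) = 0}
      ≃ {y : ι → ZMod (p^r) // y ᵥ* (M'.map ⇑φ) = 0} :=
    { toFun := fun x => ⟨fun a => x.1 (e a), (hcond1 x.1).mp x.2⟩
      invFun := fun y => ⟨fun i => y.1 (e.symm i), (hcond1 _).mpr (by
        simpa only [Equiv.symm_apply_apply] using y.2)⟩
      left_inv := fun x => Subtype.ext (by funext i; simp)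
      right_inv := fun y => Subtype.ext (by funext a; simp) }
  set Pr : Matrix ι ι (ZMod (p^r)) := PQ.map ⇑φ with hPrd
  have hPrdet : IsUnit Pr.det := by
    have h2 : Pr.det = φ PQ.det := (RingHom.map_det φ PQ).symm
    rw [h2]
    exact hPQdet.map φ
  have hPrTdet : IsUnit (Prᵀ).det := by rw [Matrix.det_transpose]; exact hPrdet
  have hW2map : W2.map ⇑φ = Prᵀ * (M'.map ⇑φ) * Pr := by
    rw [hW2]
    rw [show ((PQᵀ * M' * PQ).map ⇑φ) = (PQᵀ).map ⇑φ * M'.map ⇑φ * PQ.map ⇑φ from by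
      rw [← Matrix.map_mul, ← Matrix.map_mul]]
    rfl
  have hcond2 : ∀ z : ι → ZMod (p^r), z ᵥ* (W2.map ⇑φ) = 0 ↔
      (z ᵥ* Prᵀ) ᵥ* (M'.map ⇑φ) = 0 := by
    intro z
    have hexp : ((z ᵥ* Prᵀ) ᵥ* (M'.map ⇑φ)) ᵥ* Pr = z ᵥ* (W2.map ⇑φ) := by
      rw [hW2map, Matrix.vecMul_vecMul, Matrix.vecMul_vecMul, Matrix.mul_assoc]
    constructor
    · intro h
      apply vecMul_cancel hPrdet
      rw [hexp, h]
    · intro h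
      rw [← hexp, h, Matrix.zero_vecMul]
  let E2 : {y : ι → ZMod (p^r) // y ᵥ* (M'.map ⇑φ) = 0}
      ≃ {z : ι → ZMod (p^r) // z ᵥ* (W2.map ⇑φ) = 0} :=
    { toFun := fun y => ⟨y.1 ᵥ* (Prᵀ)⁻¹, (hcond2 _).mpr (by
        rw [Matrix.vecMul_vecMul y.1 ((Prᵀ)⁻¹) (Prᵀ), Matrix.nonsing_inv_mul _ hPrTdet,
          Matrix.vecMul_one]
        exact y.2)⟩
      invFun := fun z => ⟨z.1 ᵥ* Prᵀ, (hcond2 _).mp z.2⟩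
      left_inv := fun y => Subtype.ext (by
        show (y.1 ᵥ* (Prᵀ)⁻¹) ᵥ* Prᵀ = y.1
        rw [Matrix.vecMul_vecMul, Matrix.nonsing_inv_mul _ hPrTdet, Matrix.vecMul_one])
      right_inv := fun z => Subtype.ext (by
        show (z.1 ᵥ* Prᵀ) ᵥ* (Prᵀ)⁻¹ = z.1
        rw [Matrix.vecMul_vecMul, Matrix.mul_nonsing_inv _ hPrTdet, Matrix.vecMul_one]) }
  have hW2mapblocks : W2.map ⇑φ = Matrix.fromBlocks (A.map ⇑φ) 0 0 (G.map ⇑φ) := by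
    rw [hW2blocks, Matrix.fromBlocks_map, Matrix.map_zero _ (map_zero φ),
      Matrix.map_zero _ (map_zero φ)]
  have hAφdet : IsUnit ((A.map ⇑φ).det) := by
    have h2 : (A.map ⇑φ).det = φ A.det := (RingHom.map_det φ A).symm
    rw [h2]
    exact hAdet.map φ
  have hcond3 : ∀ z : ι → ZMod (p^r), z ᵥ* (W2.map ⇑φ) = 0 ↔
      ((z ∘ Sum.inl) = 0 ∧ (z ∘ Sum.inr) ᵥ* (G.map ⇑φ) = 0) := by
    intro z
    rw [hW2mapblocks, Matrix.vecMul_fromBlocks, Matrix.vecMul_zero, Matrix.vecMul_zero,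
      add_zero, zero_add]
    constructor
    · intro h
      have hl : (z ∘ Sum.inl) ᵥ* (A.map ⇑φ) = 0 :=
        funext fun i => by simpa using congrFun h (Sum.inl i)
      have hr : (z ∘ Sum.inr) ᵥ* (G.map ⇑φ) = 0 :=
        funext fun j => by simpa using congrFun h (Sum.inr j)
      exact ⟨vecMul_cancel hAφdet hl, hr⟩
    · rintro ⟨h1, h2⟩
      funext a
      cases a <;> simp [h1, h2, Matrix.zero_vecMul]
  let E3 : {z : ι → ZMod (p^r) // z ᵥ* (W2.map ⇑φ) = 0}
      ≃ {u : Fin 2 → ZMod (p^r) // u ᵥ* (G.map ⇑φ) = 0} :=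
    { toFun := fun z => ⟨z.1 ∘ Sum.inr, ((hcond3 z.1).mp z.2).2⟩
      invFun := fun u => ⟨Sum.elim 0 u.1, (hcond3 _).mpr ⟨funext fun i => rfl, u.2⟩⟩
      left_inv := fun z => Subtype.ext (funext fun a => by
        cases a with
        | inl i => exact (congrFun ((hcond3 z.1).mp z.2).1 i).symm
        | inr j => rfl)
      right_inv := fun u => Subtype.ext rfl }
  -- the 2x2 block
  have hGφ00 : (G.map ⇑φ) 0 0 = 0 := by rw [Matrix.map_apply, hG00, map_zero]
  have hGφ11 : (G.map ⇑φ) 1 1 = 0 := by rw [Matrix.map_apply, hG11, map_zero]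
  have hGφ10 : (G.map ⇑φ) 1 0 = -(φ g) := by rw [Matrix.map_apply, hG10, map_neg]
  have hGφ01 : (G.map ⇑φ) 0 1 = φ g := by rw [Matrix.map_apply, ← hg]
  have hannG : ∀ t : ZMod (p^r), t * φ g = 0 ↔ t * (p:ZMod (p^r))^k = 0 := by
    intro t
    have hufac : φ g = φ ((PadicInt.unitCoeff hgne : ℤ_[p])) * (p:ZMod (p^r))^k := by
      conv_lhs => rw [PadicInt.unitCoeff_spec hgne]
      rw [_root_.map_mul, _root_.map_pow, map_natCast]
    have hu : IsUnit (φ ((PadicInt.unitCoeff hgne : ℤ_[p]))) :=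
      (PadicInt.unitCoeff hgne).isUnit.map φ
    rw [hufac, show t * (φ ((PadicInt.unitCoeff hgne : ℤ_[p])) * (p:ZMod (p^r))^k)
      = t * (p:ZMod (p^r))^k * φ ((PadicInt.unitCoeff hgne : ℤ_[p])) from by ring,
      IsUnit.mul_left_eq_zero hu]
  have hcond4 : ∀ u : Fin 2 → ZMod (p^r), u ᵥ* (G.map ⇑φ) = 0 ↔
      (u 0 * (p:ZMod (p^r))^k = 0 ∧ u 1 * (p:ZMod (p^r))^k = 0) := by
    intro u
    have hvec : u ᵥ* (G.map ⇑φ)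
        = fun j => u 0 * (G.map ⇑φ) 0 j + u 1 * (G.map ⇑φ) 1 j := by
      funext j
      rw [Matrix.vecMul, dotProduct]
      rw [Fin.sum_univ_two]
    rw [hvec, funext_iff, Fin.forall_fin_two]
    simp only [Pi.zero_apply, hGφ00, hGφ01, hGφ10, hGφ11, mul_zero, mul_neg, zero_add,
      add_zero, neg_eq_zero]
    rw [hannG, hannG]
    exact and_comm
  let E4 : {u : Fin 2 → ZMod (p^r) // u ᵥ* (G.map ⇑φ) = 0}
      ≃ ({t : ZMod (p^r) // t * (p:ZMod (p^r))^k = 0}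
          × {t : ZMod (p^r) // t * (p:ZMod (p^r))^k = 0}) :=
    { toFun := fun u => (⟨u.1 0, ((hcond4 u.1).mp u.2).1⟩, ⟨u.1 1, ((hcond4 u.1).mp u.2).2⟩)
      invFun := fun st => ⟨![st.1.1, st.2.1], (hcond4 _).mpr ⟨by simpa using st.1.2, by simpa using st.2.2⟩⟩
      left_inv := fun u => Subtype.ext (by
        funext j
        fin_cases j <;> simp)
      right_inv := fun st => by
        apply Prod.ext <;> (apply Subtype.ext; simp) }
  rw [Nat.card_congr (E1.trans (E2.trans (E3.trans E4))), Nat.card_prod, card_ann p r k,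
    ← pow_add]
  congr 1
  have hnn := Nat.zero_le g.valuation
  omega
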